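/- For an augmented unital associative dg algebra A over R, the concatenation operator ∇ : BA⊗BA → BA, [a₁|⋯|a_k]⊗[b₁|⋯|b_l] ↦ [a₁|⋯|a_k|b₁|⋯|b_l], is a chain homotopy inverse-type identity: its differential equals d(∇) = ∇⁽³⁾(1⊗μ̄⊗1)(1⊗π⊗π⊗1)(Δ⊗Δ), where π : BA → B₁A = s⁻¹A is the projection, μ̄ = σ⁻¹μ_A(σ⊗σ) : s⁻¹A⊗s⁻¹A → s⁻¹A is the desuspended multiplication, Δ is the deconcatenation coproduct and ∇⁽³⁾ the threefold concatenation. -/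

import Mathlib

open scoped TensorProduct

noncomputable section

/-- The sign `(-1)^n` as an integer, for `n : ℤ`. -/
def pm (n : ℤ) : ℤ := (((-1 : ℤˣ) ^ n : ℤˣ) : ℤ)

/-- The total desuspended degree `Σᵢ (nᵢ - 1)` of a list of (cohomological) degrees;
this is the degree of the bar word `[a₁|⋯|a_k]` when `aᵢ` has degree `nᵢ`. -/
def bdeg (ds : List ℤ) : ℤ := (ds.map (fun n => n - 1)).sum

/-- An augmented, unital, associative differential graded algebra over a commutative
unital ring `R`, with cohomological grading (the differential has degree `+1`).
The grading is internal (`grading_internal`), multiplication and unit are graded,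
the differential satisfies the graded Leibniz rule, and the augmentation is a
map of augmented dg algebras.  The operator `sgn` is the canonical "sign" operator
multiplying the component of degree `i` by `(-1)^i`; it is uniquely determined by the
grading and is included as data for convenience (Koszul signs). -/
structure DGAlgebra (R : Type) [CommRing R] : Type 1 where
  carrier : Type
  [ring : Ring carrier]
  [alg : Algebra R carrier]
  grading : ℤ → Submodule R carrier
  grading_internal : DirectSum.IsInternal grading
  one_mem : (1 : carrier) ∈ grading 0
  mul_mem : ∀ {i j : ℤ} {a b : carrier},
    a ∈ grading i → b ∈ grading j → (a * b) ∈ grading (i + j)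
  d : carrier →ₗ[R] carrier
  d_mem : ∀ {i : ℤ} {a : carrier}, a ∈ grading i → d a ∈ grading (i + 1)
  d_sq : ∀ a, d (d a) = 0
  leibniz : ∀ {i : ℤ} {a b : carrier}, a ∈ grading i →
    d (a * b) = d a * b + pm i • (a * d b)
  aug : carrier →ₐ[R] R
  aug_d : ∀ a, aug (d a) = 0
  aug_graded : ∀ {i : ℤ} {a : carrier}, a ∈ grading i → i ≠ 0 → aug a = 0
  sgn : carrier →ₗ[R] carrier
  sgn_apply : ∀ {i : ℤ} {a : carrier}, a ∈ grading i → sgn a = pm i • a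

attribute [instance] DGAlgebra.ring DGAlgebra.alg

namespace DGAlgebra

variable {R : Type} [CommRing R] (A : DGAlgebra R)

/-- The unnormalized bar construction `BA = T(s⁻¹A)` of `A`, *as a graded `R`-module*.
At the level of (ungraded) `R`-modules it is the tensor algebra on the underlying
module of `A`; the word `[a₁|⋯|a_k]` is the product `ι a₁ ⋯ ι a_k`.  The
(de)suspension is invisible at the module level; it is accounted for by the degree
conventions (`bdeg`) and the sign operators. -/
abbrev Bar : Type := TensorAlgebra R A.carrier

/-- The bar word `[a₁|⋯|a_k] ∈ BA`. The empty word is the counit element `𝟙`. -/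
def word (l : List A.carrier) : A.Bar := (l.map (TensorAlgebra.ι R)).prod

/-- `A.Homog l ds` says that the list `l` consists of homogeneous elements,
`l i` having degree `ds i`. -/
def Homog (l : List A.carrier) (ds : List ℤ) : Prop :=
  l.length = ds.length ∧ ∀ i : ℕ, l.getD i 0 ∈ A.grading (ds.getD i 0)

/-- The concatenation operator `∇ : BA ⊗ BA → BA`. -/
def concat : A.Bar ⊗[R] A.Bar →ₗ[R] A.Bar := LinearMap.mul' R A.Bar

/-- The augmentation ideal `Ā ⊆ A`. -/
def augIdeal : Submodule R A.carrier := LinearMap.ker A.aug.toLinearMap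

/-- The normalized bar construction `B̄A = T(s⁻¹Ā)`. -/
abbrev NBar : Type := TensorAlgebra R A.augIdeal

/-- words in the normalized bar construction. -/
def nword (l : List A.augIdeal) : A.NBar := (l.map (TensorAlgebra.ι R)).prod

/-- The canonical inclusion `B̄A → BA`. -/
def nincl : A.NBar →ₗ[R] A.Bar :=
  (TensorAlgebra.lift R ((TensorAlgebra.ι R) ∘ₗ A.augIdeal.subtype)).toLinearMap

/-- The (internal, total-degree) grading of the bar construction:
`(BA)_n` is spanned by the homogeneous words of total desuspended degree `n`. -/
def barGrading (n : ℤ) : Submodule R A.Bar :=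
  Submodule.span R {x | ∃ l ds, A.Homog l ds ∧ bdeg ds = n ∧ x = A.word l}

end DGAlgebra

/-- All the canonical structure carried by the bar construction `BA` of an augmented
dg algebra `A`: the deconcatenation coproduct `Δ`, the bar differential `dB`
(tensor-product differential plus the `∂` multiplying adjacent entries through the
desuspended multiplication), the sign operator `sgnB`, the graded twist `tw`, the
canonical twisting cochain `α` (projection to `B₁A = s⁻¹A` followed by `σ`), and the
counit `εB`.  Each operator is uniquely determined by its prescribed values on the
words `[a₁|⋯|a_k]`, which span `BA`. -/
structure BarData {R : Type} [CommRing R] (A : DGAlgebra R) : Type where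
  /-- deconcatenation coproduct -/
  Δ : A.Bar →ₗ[R] A.Bar ⊗[R] A.Bar
  Δ_word : ∀ l : List A.carrier,
    Δ (A.word l) = ∑ i ∈ Finset.range (l.length + 1),
      A.word (l.take i) ⊗ₜ[R] A.word (l.drop i)
  /-- the bar differential -/
  dB : A.Bar →ₗ[R] A.Bar
  dB_word : ∀ (l : List A.carrier) (ds : List ℤ), A.Homog l ds →
    dB (A.word l) =
      - (∑ i ∈ Finset.range l.length,
          pm (bdeg (ds.take i)) • A.word (l.set i (A.d (l.getD i 0))))
      + ∑ i ∈ Finset.range (l.length - 1),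
          pm (bdeg (ds.take (i + 1))) •
            A.word (l.take i ++ (l.getD i 0 * l.getD (i + 1) 0) :: l.drop (i + 2))
  /-- the sign operator of `BA` -/
  sgnB : A.Bar →ₗ[R] A.Bar
  sgnB_word : ∀ (l : List A.carrier) (ds : List ℤ), A.Homog l ds →
    sgnB (A.word l) = pm (bdeg ds) • A.word l
  /-- the graded (Koszul) twist `BA ⊗ BA → BA ⊗ BA` -/
  tw : A.Bar ⊗[R] A.Bar →ₗ[R] A.Bar ⊗[R] A.Bar
  tw_word : ∀ (l m : List A.carrier) (ds es : List ℤ), A.Homog l ds → A.Homog m es →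
    tw (A.word l ⊗ₜ[R] A.word m) = pm (bdeg ds * bdeg es) • (A.word m ⊗ₜ[R] A.word l)
  /-- the canonical twisting cochain `α : BA → A` -/
  α : A.Bar →ₗ[R] A.carrier
  α_single : ∀ a : A.carrier, α (A.word [a]) = a
  α_word : ∀ l : List A.carrier, l.length ≠ 1 → α (A.word l) = 0
  /-- the counit of `BA` -/
  εB : A.Bar →ₗ[R] R
  εB_one : εB (1 : A.Bar) = 1
  εB_word : ∀ l : List A.carrier, l ≠ [] → εB (A.word l) = 0

namespace BarData

variable {R : Type} [CommRing R] {A : DGAlgebra R} (BD : BarData A)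

/-- `sgnB` raised to the power `n` (only the parity of `n` matters);
used to express Koszul signs `(-1)^{n·|x|}`. -/
def sgnPow (n : ℤ) : A.Bar →ₗ[R] A.Bar :=
  if n % 2 = 0 then LinearMap.id else BD.sgnB

/-- The differential of `BA ⊗ BA` (with the Koszul sign rule). -/
def dBB : A.Bar ⊗[R] A.Bar →ₗ[R] A.Bar ⊗[R] A.Bar :=
  TensorProduct.map BD.dB LinearMap.id + TensorProduct.map BD.sgnB BD.dB

/-- The middle interchange `1 ⊗ tw ⊗ 1` on `(BA ⊗ BA) ⊗ (BA ⊗ BA)`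
(the graded twist of the two middle factors). -/
def midTw : (A.Bar ⊗[R] A.Bar) ⊗[R] (A.Bar ⊗[R] A.Bar) →ₗ[R]
    (A.Bar ⊗[R] A.Bar) ⊗[R] (A.Bar ⊗[R] A.Bar) :=
  let e₁ := TensorProduct.assoc R A.Bar A.Bar (A.Bar ⊗[R] A.Bar)
  let e₂ := TensorProduct.congr (LinearEquiv.refl R A.Bar)
    (TensorProduct.assoc R A.Bar A.Bar A.Bar).symm
  e₁.symm.toLinearMap ∘ₗ e₂.symm.toLinearMap ∘ₗ
    (TensorProduct.map LinearMap.id (TensorProduct.map BD.tw LinearMap.id)) ∘ₗ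
    e₂.toLinearMap ∘ₗ e₁.toLinearMap

/-- The coproduct of `BA ⊗ BA` (with Koszul signs). -/
def ΔBB : A.Bar ⊗[R] A.Bar →ₗ[R] (A.Bar ⊗[R] A.Bar) ⊗[R] (A.Bar ⊗[R] A.Bar) :=
  BD.midTw ∘ₗ TensorProduct.map BD.Δ BD.Δ

/-- The counit of `BA ⊗ BA`. -/
def εBB : A.Bar ⊗[R] A.Bar →ₗ[R] R :=
  (TensorProduct.lid R R).toLinearMap ∘ₗ TensorProduct.map BD.εB BD.εB

/-- The twisting cochain `β = ε_{BA} ⊗ α : BA ⊗ BA → A`. -/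
def β : A.Bar ⊗[R] A.Bar →ₗ[R] A.carrier :=
  (TensorProduct.lid R A.carrier).toLinearMap ∘ₗ TensorProduct.map BD.εB BD.α

end BarData

/-- `E : BA ⊗ BA → A` is a twisting cochain: it has degree `+1`, satisfies
`E(𝟙,-) = E(-,𝟙) = α` and the twisting cochain equation `d(E) = E ∪ E`,
written as `d∘E + E∘d_{BA⊗BA} = μ_A (E ⊗ E) Δ_{BA⊗BA}` (all Koszul signs being
expressed via the sign operators). -/
structure IsTwistingCochain {R : Type} [CommRing R] {A : DGAlgebra R} (BD : BarData A)
    (E : A.Bar ⊗[R] A.Bar →ₗ[R] A.carrier) : Prop where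
  degree : ∀ (l m : List A.carrier) (ds es : List ℤ), A.Homog l ds → A.Homog m es →
    E (A.word l ⊗ₜ[R] A.word m) ∈ A.grading (bdeg ds + bdeg es + 1)
  unit_left : ∀ b : A.Bar, E ((1 : A.Bar) ⊗ₜ[R] b) = BD.α b
  unit_right : ∀ a : A.Bar, E (a ⊗ₜ[R] (1 : A.Bar)) = BD.α a
  twist : A.d ∘ₗ E + E ∘ₗ BD.dBB =
    LinearMap.mul' R A.carrier ∘ₗ
      TensorProduct.map (E ∘ₗ TensorProduct.map BD.sgnB BD.sgnB) E ∘ₗ BD.ΔBB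

/-- A twisting cochain is *normalized* if `E([1],𝟙) = E(𝟙,[1]) = 1`, if `E(a,b) = 0`
whenever the total bar length is `> 1` and some entry equals `1 ∈ A`, and if
`E(a,b)` lies in the augmentation ideal whenever the total bar length is `> 1`. -/
structure IsNormalized {R : Type} [CommRing R] {A : DGAlgebra R}
    (E : A.Bar ⊗[R] A.Bar →ₗ[R] A.carrier) : Prop where
  one_right : E (A.word [(1 : A.carrier)] ⊗ₜ[R] (1 : A.Bar)) = 1
  one_left : E ((1 : A.Bar) ⊗ₜ[R] A.word [(1 : A.carrier)]) = 1
  vanish : ∀ l m : List A.carrier, 1 < l.length + m.length →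
    ((1 : A.carrier) ∈ l ∨ (1 : A.carrier) ∈ m) → E (A.word l ⊗ₜ[R] A.word m) = 0
  aug_ideal : ∀ l m : List A.carrier, 1 < l.length + m.length →
    A.aug (E (A.word l ⊗ₜ[R] A.word m)) = 0

/-- A twisting cochain has *level 3* if `E(a,b) = 0` whenever `a` has bar length `> 1`. -/
def IsLevel3 {R : Type} [CommRing R] {A : DGAlgebra R}
    (E : A.Bar ⊗[R] A.Bar →ₗ[R] A.carrier) : Prop :=
  ∀ (l m : List A.carrier), 1 < l.length → E (A.word l ⊗ₜ[R] A.word m) = 0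

/-- A multiplication on the unnormalized bar construction `BA`: a morphism of
dg coalgebras `BA ⊗ BA → BA` of degree `0` having the counit element `𝟙` as a
two-sided unit (associativity is *not* required). -/
structure BarMult {R : Type} [CommRing R] {A : DGAlgebra R} (BD : BarData A) : Type where
  f : A.Bar ⊗[R] A.Bar →ₗ[R] A.Bar
  one_mul : ∀ b : A.Bar, f ((1 : A.Bar) ⊗ₜ[R] b) = b
  mul_one : ∀ a : A.Bar, f (a ⊗ₜ[R] (1 : A.Bar)) = a
  graded : ∀ (l m : List A.carrier) (ds es : List ℤ), A.Homog l ds → A.Homog m es →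
    f (A.word l ⊗ₜ[R] A.word m) ∈ A.barGrading (bdeg ds + bdeg es)
  chain : BD.dB ∘ₗ f = f ∘ₗ BD.dBB
  counit : BD.εB ∘ₗ f = BD.εBB
  coalg : BD.Δ ∘ₗ f = TensorProduct.map f f ∘ₗ BD.ΔBB


section Helpers

lemma pm_add (a b : ℤ) : pm (a + b) = pm a * pm b := by
  simp [pm, zpow_add]

lemma pm_zero : pm 0 = 1 := by simp [pm]

lemma pm_neg_one : pm (-1) = -1 := by
  simp [pm]

lemma pm_sub_one (a : ℤ) : pm (a - 1) = -pm a := by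
  have h : a - 1 = a + (-1) := by ring
  rw [h, pm_add, pm_neg_one, mul_neg_one]

lemma bdeg_nil : bdeg [] = 0 := rfl

lemma bdeg_append (a b : List ℤ) : bdeg (a ++ b) = bdeg a + bdeg b := by
  simp [bdeg]

lemma bdeg_single (n : ℤ) : bdeg [n] = n - 1 := by simp [bdeg]

lemma getD_take' {α : Type*} (l : List α) (d : α) (n i : ℕ) (h : i < n) :
    (l.take n).getD i d = l.getD i d := by
  simp [List.getD_eq_getElem?_getD, List.getElem?_take, h]

lemma getD_drop' {α : Type*} (l : List α) (d : α) (n i : ℕ) :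
    (l.drop n).getD i d = l.getD (n + i) d := by
  simp [List.getD_eq_getElem?_getD, List.getElem?_drop]

lemma drop_last' {α : Type*} (l : List α) (d : α) (n : ℕ) (h : l.length = n + 1) :
    l.drop n = [l.getD n d] := by
  have hn : n < l.length := by omega
  rw [List.drop_eq_getElem_cons hn]
  have : l.drop (n + 1) = [] := by
    apply List.drop_eq_nil_of_le; omega
  rw [this, List.getD_eq_getElem l d hn]

lemma take_one' {α : Type*} (l : List α) (d : α) (h : l ≠ []) :
    l.take 1 = [l.getD 0 d] := by
  cases l with
  | nil => exact absurd rfl h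
  | cons a t => simp

namespace DGAlgebra

variable {R : Type} [CommRing R] (A : DGAlgebra R)

lemma word_nil : A.word [] = 1 := rfl

lemma word_cons (a : A.carrier) (l : List A.carrier) :
    A.word (a :: l) = TensorAlgebra.ι R a * A.word l := by
  simp [DGAlgebra.word]

lemma word_append (l m : List A.carrier) : A.word (l ++ m) = A.word l * A.word m := by
  simp [DGAlgebra.word]

lemma Homog.nil : A.Homog [] [] :=
  ⟨rfl, fun i => by simp only [List.getD_nil]; exact zero_mem _⟩

variable {A}

lemma Homog.length_eq {l : List A.carrier} {ds : List ℤ} (h : A.Homog l ds) :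
    l.length = ds.length := h.1

lemma Homog.single {a : A.carrier} {i : ℤ} (ha : a ∈ A.grading i) : A.Homog [a] [i] := by
  refine ⟨rfl, fun j => ?_⟩
  match j with
  | 0 => exact ha
  | (n+1) => simp only [List.getD_cons_succ, List.getD_nil]; exact zero_mem _

lemma Homog.append {l m : List A.carrier} {ds es : List ℤ}
    (hl : A.Homog l ds) (hm : A.Homog m es) : A.Homog (l ++ m) (ds ++ es) := by
  have h1 := hl.1
  refine ⟨by simp [hl.1, hm.1], fun i => ?_⟩
  by_cases h : i < l.length
  · rw [List.getD_append _ _ _ _ h, List.getD_append _ _ _ _ (by omega : i < ds.length)]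
    exact hl.2 i
  · rw [List.getD_append_right l m _ _ (by omega), List.getD_append_right ds es _ _
      (by omega : ds.length ≤ i)]
    rw [h1]
    exact hm.2 (i - ds.length)

lemma Homog.take {l : List A.carrier} {ds : List ℤ} (hl : A.Homog l ds) (n : ℕ) :
    A.Homog (l.take n) (ds.take n) := by
  refine ⟨by simp [hl.1], fun i => ?_⟩
  by_cases h : i < n
  · rw [getD_take' _ _ _ _ h, getD_take' _ _ _ _ h]; exact hl.2 i
  · rw [List.getD_eq_default _ _ (by simp; omega), List.getD_eq_default _ _ (by simp; omega)]
    exact zero_mem _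

lemma Homog.drop {l : List A.carrier} {ds : List ℤ} (hl : A.Homog l ds) (n : ℕ) :
    A.Homog (l.drop n) (ds.drop n) := by
  refine ⟨by simp [hl.1], fun i => ?_⟩
  rw [getD_drop', getD_drop']
  exact hl.2 (n + i)

variable (A)

/-- The set of homogeneous words. -/
def homogWords : Set A.Bar := {x | ∃ l ds, A.Homog l ds ∧ x = A.word l}

lemma span_homogWords : Submodule.span R A.homogWords = ⊤ := by
  rw [eq_top_iff]
  rintro x -
  induction x using TensorAlgebra.induction with
  | algebraMap r =>
    rw [Algebra.algebraMap_eq_smul_one]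
    exact Submodule.smul_mem _ _ (Submodule.subset_span ⟨[], [], Homog.nil A, rfl⟩)
  | ι x =>
    have hx : x ∈ ⨆ i, A.grading i := by
      rw [A.grading_internal.submodule_iSup_eq_top]; trivial
    refine Submodule.iSup_induction A.grading (motive := fun y => (TensorAlgebra.ι R) y ∈
      Submodule.span R A.homogWords) hx ?_ ?_ ?_
    · intro i a ha
      refine Submodule.subset_span ⟨[a], [i], Homog.single ha, ?_⟩
      simp [DGAlgebra.word]
    · simp only [map_zero]; exact zero_mem _
    · intro a b ha hb
      rw [map_add]; exact add_mem ha hb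
  | mul a b ha hb =>
    have h := Submodule.mul_mem_mul ha hb
    rw [Submodule.span_mul_span] at h
    refine Submodule.span_le.mpr ?_ h
    rintro _ ⟨x, ⟨l, ds, hl, rfl⟩, y, ⟨m, es, hm, rfl⟩, rfl⟩
    exact Submodule.subset_span ⟨l ++ m, ds ++ es, hl.append hm, (A.word_append l m).symm⟩
  | add a b ha hb => exact add_mem ha hb

lemma ext_homog {f g : A.Bar ⊗[R] A.Bar →ₗ[R] A.Bar}
    (h : ∀ (l m : List A.carrier) (ds es : List ℤ), A.Homog l ds → A.Homog m es →
      f (A.word l ⊗ₜ[R] A.word m) = g (A.word l ⊗ₜ[R] A.word m)) : f = g := by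
  apply TensorProduct.curry_injective
  apply LinearMap.ext_on A.span_homogWords
  rintro x ⟨l, ds, hl, rfl⟩
  apply LinearMap.ext_on A.span_homogWords
  rintro y ⟨m, es, hm, rfl⟩
  simpa using h l m ds es hl hm

end DGAlgebra

end Helpers
section KeyLemma

open Finset

lemma sum_split {M : Type*} [AddCommMonoid M] (k K : ℕ) (hk : 1 ≤ k) (hK : 1 ≤ K)
    (G : ℕ → M) :
    ∑ i ∈ Finset.range (k + K - 1), G i
      = (∑ i ∈ Finset.range (k - 1), G i + G (k - 1)) + ∑ j ∈ Finset.range (K - 1), G (k + j) := by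
  obtain ⟨n, rfl⟩ : ∃ n, k = n + 1 := ⟨k - 1, by omega⟩
  obtain ⟨p, rfl⟩ : ∃ p, K = p + 1 := ⟨K - 1, by omega⟩
  have h1 : n + 1 + (p + 1) - 1 = n + (p + 1) := by omega
  rw [h1, Finset.sum_range_add, Finset.sum_range_succ']
  simp only [Nat.add_sub_cancel, Nat.add_zero]
  have h3 : ∑ x ∈ Finset.range p, G (n + (x + 1)) = ∑ x ∈ Finset.range p, G (n + 1 + x) := by
    apply Finset.sum_congr rfl; intro x _; congr 1; omega
  rw [h3]; abel

namespace BarData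

variable {R : Type} [CommRing R] {A : DGAlgebra R} (BD : BarData A)

lemma dB_nil : BD.dB (A.word []) = 0 := by
  simpa using BD.dB_word [] [] (DGAlgebra.Homog.nil A)

lemma α_nil : BD.α (A.word []) = 0 := BD.α_word [] (by simp)

lemma sgnB_nil : BD.sgnB (A.word []) = A.word [] := by
  simpa [bdeg_nil, pm_zero] using BD.sgnB_word [] [] (DGAlgebra.Homog.nil A)

lemma key (l m : List A.carrier) (ds es : List ℤ) (hl : A.Homog l ds) (hm : A.Homog m es) :
    BD.dB (A.word l * A.word m)
      - (BD.dB (A.word l) * A.word m + BD.sgnB (A.word l) * BD.dB (A.word m)) =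
    ∑ i ∈ Finset.range (l.length + 1), ∑ j ∈ Finset.range (m.length + 1),
      BD.sgnB (A.word (l.take i)) *
        (TensorAlgebra.ι R
            (-(A.sgn (BD.α (A.word (l.drop i))) * BD.α (A.word (m.take j)))) *
          A.word (m.drop j)) := by
  rcases eq_or_ne l [] with rfl | hlne
  · have h0 := BD.dB_nil
    have hs := BD.sgnB_nil
    rw [A.word_nil] at h0 hs
    rw [A.word_nil, one_mul, h0, hs, zero_mul, one_mul, zero_add, sub_self]
    symm
    apply Finset.sum_eq_zero; intro i _
    apply Finset.sum_eq_zero; intro j _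
    simp [BD.α_nil]
  rcases eq_or_ne m [] with rfl | hmne
  · have h0 := BD.dB_nil
    rw [A.word_nil] at h0
    rw [A.word_nil, mul_one, h0, mul_zero, mul_one, add_zero, sub_self]
    symm
    apply Finset.sum_eq_zero; intro i _
    apply Finset.sum_eq_zero; intro j _
    simp [BD.α_nil]
  -- main case
  have hk : 1 ≤ l.length := List.length_pos_iff.mpr hlne
  have hK : 1 ≤ m.length := List.length_pos_iff.mpr hmne
  have hlen : l.length = ds.length := hl.1
  have hmlen : m.length = es.length := hm.1
  -- the cross term
  set CROSS : A.Bar := pm (bdeg ds) •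
    A.word (l.take (l.length - 1) ++
      (l.getD (l.length - 1) 0 * m.getD 0 0) :: m.drop 1) with hCROSS
  -- Step A : the right-hand double sum collapses to CROSS
  have hbd : bdeg ds = bdeg (ds.take (l.length - 1)) + (ds.getD (l.length - 1) 0 - 1) := by
    conv_lhs => rw [← List.take_append_drop (l.length - 1) ds]
    rw [bdeg_append, drop_last' ds 0 (l.length - 1) (by omega), bdeg_single]
  have hRHS : (∑ i ∈ Finset.range (l.length + 1), ∑ j ∈ Finset.range (m.length + 1),
      BD.sgnB (A.word (l.take i)) *
        (TensorAlgebra.ι R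
            (-(A.sgn (BD.α (A.word (l.drop i))) * BD.α (A.word (m.take j)))) *
          A.word (m.drop j))) = CROSS := by
    rw [Finset.sum_eq_single_of_mem (l.length - 1) (Finset.mem_range.mpr (by omega))]
    · rw [Finset.sum_eq_single_of_mem 1 (Finset.mem_range.mpr (by omega))]
      · rw [drop_last' l 0 (l.length - 1) (by omega), take_one' m 0 hmne,
          BD.α_single, BD.α_single, A.sgn_apply (hl.2 (l.length - 1)),
          BD.sgnB_word _ _ (hl.take (l.length - 1))]
        rw [hCROSS, A.word_append, A.word_cons, hbd, pm_add, pm_sub_one]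
        have hι : (TensorAlgebra.ι R)
            (-(pm (ds.getD (l.length - 1) 0) • l.getD (l.length - 1) 0 * m.getD 0 0))
            = (-pm (ds.getD (l.length - 1) 0)) •
              (TensorAlgebra.ι R) (l.getD (l.length - 1) 0 * m.getD 0 0) := by
          rw [smul_mul_assoc, ← neg_smul, map_zsmul]
        rw [hι]
        simp only [smul_mul_assoc, mul_smul_comm, smul_smul]
        rw [mul_comm (pm (bdeg (List.take (l.length - 1) ds)))]
      · intro j hj hj1
        have hα : BD.α (A.word (m.take j)) = 0 := by
          apply BD.α_word
          rw [List.length_take]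
          have := Finset.mem_range.mp hj
          omega
        simp [hα]
    · intro i hi hine
      apply Finset.sum_eq_zero; intro j _
      have hα : BD.α (A.word (l.drop i)) = 0 := by
        apply BD.α_word
        rw [List.length_drop]
        have := Finset.mem_range.mp hi
        omega
      simp [hα]
  rw [hRHS]
  -- Step B : expand the bar differentials
  rw [← A.word_append,
    BD.dB_word (l ++ m) (ds ++ es) (hl.append hm),
    BD.dB_word l ds hl, BD.dB_word m es hm, BD.sgnB_word l ds hl]
  simp only [List.length_append]
  -- canonical atoms
  set SA : A.Bar := ∑ i ∈ Finset.range l.length,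
    pm (bdeg (ds.take i)) • (A.word (l.set i (A.d (l.getD i 0))) * A.word m) with hSA
  set SB : A.Bar := ∑ j ∈ Finset.range m.length,
    (pm (bdeg ds) * pm (bdeg (es.take j))) •
      (A.word l * A.word (m.set j (A.d (m.getD j 0)))) with hSB
  set SC : A.Bar := ∑ i ∈ Finset.range (l.length - 1),
    pm (bdeg (ds.take (i + 1))) •
      (A.word (l.take i ++ (l.getD i 0 * l.getD (i + 1) 0) :: l.drop (i + 2)) * A.word m)
    with hSC
  set SD : A.Bar := ∑ j ∈ Finset.range (m.length - 1),
    (pm (bdeg ds) * pm (bdeg (es.take (j + 1)))) •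
      (A.word l * A.word (m.take j ++ (m.getD j 0 * m.getD (j + 1) 0) :: m.drop (j + 2)))
    with hSD
  have split1 : ∑ i ∈ Finset.range (l.length + m.length),
      pm (bdeg ((ds ++ es).take i)) •
        A.word ((l ++ m).set i (A.d ((l ++ m).getD i 0))) = SA + SB := by
    rw [Finset.sum_range_add, hSA, hSB]
    congr 1
    · apply Finset.sum_congr rfl; intro i hi
      have hi' : i < l.length := Finset.mem_range.mp hi
      rw [List.take_append_of_le_length (by omega), List.getD_append _ _ _ _ hi',
        List.set_append, if_pos hi', A.word_append]

    · apply Finset.sum_congr rfl; intro j _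
      have htake : (ds ++ es).take (l.length + j) = ds ++ es.take j := by
        rw [hlen]; exact List.take_length_add_append j
      have hget : (l ++ m).getD (l.length + j) 0 = m.getD j 0 := by
        rw [List.getD_append_right l m _ _ (by omega)]
        congr 1; omega
      have hset : ∀ x : A.carrier, (l ++ m).set (l.length + j) x = l ++ m.set j x := by
        intro x
        rw [List.set_append, if_neg (by omega)]
        congr 2
        omega
      rw [htake, hget, hset, bdeg_append, pm_add, A.word_append]
  have split2 : ∑ i ∈ Finset.range (l.length + m.length - 1),
      pm (bdeg ((ds ++ es).take (i + 1))) •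
        A.word ((l ++ m).take i ++
          ((l ++ m).getD i 0 * (l ++ m).getD (i + 1) 0) :: (l ++ m).drop (i + 2))
      = (SC + CROSS) + SD := by
    rw [sum_split l.length m.length hk hK, hSC, hCROSS, hSD]
    congr 1
    congr 1
    · apply Finset.sum_congr rfl; intro i hi
      have hi' : i < l.length - 1 := Finset.mem_range.mp hi
      have hw : (l ++ m).take i ++
          ((l ++ m).getD i 0 * (l ++ m).getD (i + 1) 0) :: (l ++ m).drop (i + 2)
          = (l.take i ++ (l.getD i 0 * l.getD (i + 1) 0) :: l.drop (i + 2)) ++ m := by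
        rw [List.take_append_of_le_length (by omega),
          List.getD_append _ _ _ _ (by omega), List.getD_append _ _ _ _ (by omega),
          List.drop_append_of_le_length (by omega)]
        simp [List.append_assoc]
      rw [List.take_append_of_le_length (by omega : i + 1 ≤ ds.length), hw,
        A.word_append]
    · -- the cross term
      have h1 : l.length - 1 + 1 = l.length := by omega
      have h2 : l.length - 1 + 2 = l.length + 1 := by omega
      have htake : (ds ++ es).take (l.length - 1 + 1) = ds := by
        rw [h1, hlen]; exact List.take_left
      have hw : (l ++ m).take (l.length - 1) ++
          ((l ++ m).getD (l.length - 1) 0 * (l ++ m).getD (l.length - 1 + 1) 0) ::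
            (l ++ m).drop (l.length - 1 + 2)
          = l.take (l.length - 1) ++ (l.getD (l.length - 1) 0 * m.getD 0 0) :: m.drop 1 := by
        rw [List.take_append_of_le_length (by omega),
          List.getD_append _ _ _ _ (by omega), h1, h2,
          List.getD_append_right l m _ _ (by omega)]
        have h3 : l.length - l.length = 0 := by omega
        rw [h3]
        have h4 : (l ++ m).drop (l.length + 1) = m.drop 1 := List.drop_length_add_append 1
        rw [h4]
      rw [htake, hw]
    · apply Finset.sum_congr rfl; intro j _
      have htake : (ds ++ es).take (l.length + j + 1) = ds ++ es.take (j + 1) := by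
        rw [show l.length + j + 1 = l.length + (j + 1) by omega, hlen]
        exact List.take_length_add_append (j + 1)
      have hget1 : (l ++ m).getD (l.length + j) 0 = m.getD j 0 := by
        rw [List.getD_append_right l m _ _ (by omega)]; congr 1; omega
      have hget2 : (l ++ m).getD (l.length + j + 1) 0 = m.getD (j + 1) 0 := by
        rw [List.getD_append_right l m _ _ (by omega)]; congr 1; omega
      have hdrop : (l ++ m).drop (l.length + j + 2) = m.drop (j + 2) := by
        rw [show l.length + j + 2 = l.length + (j + 2) by omega]
        exact List.drop_length_add_append (j + 2)
      have htk : (l ++ m).take (l.length + j) = l ++ m.take j := List.take_length_add_append j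
      rw [htake, hget1, hget2, hdrop, htk, bdeg_append, pm_add,
        List.append_assoc, A.word_append]
  have h3 : (-(∑ i ∈ Finset.range l.length,
        pm (bdeg (ds.take i)) • A.word (l.set i (A.d (l.getD i 0))))
      + ∑ i ∈ Finset.range (l.length - 1),
        pm (bdeg (ds.take (i + 1))) •
          A.word (l.take i ++ (l.getD i 0 * l.getD (i + 1) 0) :: l.drop (i + 2)))
        * A.word m = -SA + SC := by
    rw [add_mul, neg_mul, Finset.sum_mul, Finset.sum_mul, hSA, hSC]
    simp only [smul_mul_assoc]
  have h4 : (pm (bdeg ds) • A.word l) *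
      (-(∑ j ∈ Finset.range m.length,
        pm (bdeg (es.take j)) • A.word (m.set j (A.d (m.getD j 0))))
      + ∑ j ∈ Finset.range (m.length - 1),
        pm (bdeg (es.take (j + 1))) •
          A.word (m.take j ++ (m.getD j 0 * m.getD (j + 1) 0) :: m.drop (j + 2)))
      = -SB + SD := by
    rw [mul_add, mul_neg, Finset.mul_sum, Finset.mul_sum, hSB, hSD]
    simp only [smul_mul_assoc, mul_smul_comm, smul_smul]
    congr 1
    · congr 1
      apply Finset.sum_congr rfl; intro x _
      rw [mul_comm (pm (bdeg (List.take x es))) (pm (bdeg ds))]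
    · apply Finset.sum_congr rfl; intro x _
      rw [mul_comm (pm (bdeg (List.take (x + 1) es))) (pm (bdeg ds))]
  rw [split1, split2, h3, h4]
  abel

end BarData

end KeyLemma
set_option synthInstance.maxHeartbeats 1000000 in
set_option maxHeartbeats 1000000 in
/-- For an augmented unital associative dg algebra `A` over `R`, the
differential of the concatenation operator `∇ : BA ⊗ BA → BA` (i.e.
`d(∇) = d_B ∘ ∇ - ∇ ∘ d_{BA⊗BA}`) equals
`∇⁽³⁾ (1 ⊗ μ̄ ⊗ 1)(1 ⊗ π ⊗ π ⊗ 1)(Δ ⊗ Δ)`, where `π : BA → B₁A = s⁻¹A` is the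
projection, `μ̄ = σ⁻¹ μ_A (σ ⊗ σ)` is the desuspended multiplication (realized on
elements by `[a] ⊗ [b] ↦ (-1)^{|a|-1} [ab]`), `Δ` is the deconcatenation coproduct and
`∇⁽³⁾` the threefold concatenation.  All Koszul signs are expressed via the sign
operators. -/
theorem concat_differential {R : Type} [CommRing R] (A : DGAlgebra R) (BD : BarData A) :
    BD.dB ∘ₗ A.concat - A.concat ∘ₗ BD.dBB =
      -- `∇⁽³⁾ : BA ⊗ (BA ⊗ BA) → BA`
      (A.concat ∘ₗ TensorProduct.map LinearMap.id A.concat) ∘ₗ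
      -- `1 ⊗ (μ̄ (π ⊗ π)) ⊗ 1`, with the Koszul sign of the degree-one middle map
      (TensorProduct.map BD.sgnB (TensorProduct.map
        ((TensorAlgebra.ι R) ∘ₗ (-(LinearMap.mul' R A.carrier)) ∘ₗ
          TensorProduct.map (A.sgn ∘ₗ BD.α) BD.α)
        LinearMap.id)) ∘ₗ
      -- regrouping `(BA ⊗ BA) ⊗ (BA ⊗ BA) ≅ BA ⊗ ((BA ⊗ BA) ⊗ BA)`
      (TensorProduct.congr (LinearEquiv.refl R A.Bar)
        (TensorProduct.assoc R A.Bar A.Bar A.Bar).symm).toLinearMap ∘ₗ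
      (TensorProduct.assoc R A.Bar A.Bar (A.Bar ⊗[R] A.Bar)).toLinearMap ∘ₗ
      TensorProduct.map BD.Δ BD.Δ := by
  
  apply A.ext_homog
  intro l m ds es hl hm
  simp only [LinearMap.sub_apply, LinearMap.coe_comp, Function.comp_apply,
    DGAlgebra.concat, LinearMap.mul'_apply, BarData.dBB, LinearMap.add_apply,
    TensorProduct.map_tmul, LinearMap.id_coe, id_eq, map_add, LinearEquiv.coe_coe]
  rw [BD.Δ_word l, BD.Δ_word m]
  rw [TensorProduct.sum_tmul]
  simp only [TensorProduct.tmul_sum, map_sum, TensorProduct.assoc_tmul,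
    TensorProduct.congr_tmul, LinearEquiv.refl_apply, TensorProduct.assoc_symm_tmul,
    TensorProduct.map_tmul, LinearMap.id_coe, id_eq, LinearMap.coe_comp,
    Function.comp_apply, LinearMap.neg_apply, LinearMap.mul'_apply, LinearEquiv.coe_coe]
  exact BD.key l m ds es hl hm
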